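/- Let m ≥ 2 and let G̃₁ ≠ G̃₂ be simple bipartite graphs on [m]⊔[n] with all left degrees equal to d ≥ 3 and with identical right degree sequences. If the number of pairs (i,j) that are an edge in exactly one of the two graphs is at most k, then there is a path of simple switchings of length at most k+2 from G̃₁ to G̃₂ within the set of simple bipartite graphs on [m]⊔[n] with left degrees d and the given right degree sequence. -/

import Mathlib

open Finset

/-- A bipartite multigraph on `[n] ⊔ [m]` encoded by its adjacency (multiplicity) matrix. -/
def IsReg (n d : ℕ) (A : Fin n → Fin n → ℕ) : Prop :=
  (∀ i, ∑ j, A i j = d) ∧ (∀ j, ∑ i, A i j = d)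

/-- A multigraph is simple if all multiplicities are at most one. -/
def IsSimpleG {n m : ℕ} (A : Fin n → Fin m → ℕ) : Prop := ∀ i j, A i j ≤ 1

/-- The simple switching `⟨i,i',j,j'⟩`: replace the edges `(i,j)` and `(i',j')` by
`(i,j')` and `(i',j)`. -/
def switchM {n m : ℕ} (A : Fin n → Fin m → ℕ) (i i' : Fin n) (j j' : Fin m) :
    Fin n → Fin m → ℕ :=
  fun a b =>
    if a = i ∧ b = j then A a b - 1
    else if a = i' ∧ b = j' then A a b - 1
    else if a = i ∧ b = j' then A a b + 1
    else if a = i' ∧ b = j then A a b + 1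
    else A a b

/-- Two multigraphs are adjacent if one is obtained from the other by a simple switching
operated on two non-incident edges. -/
def AdjacentM {n : ℕ} (A B : Fin n → Fin n → ℕ) : Prop :=
  ∃ i i' j j', i ≠ i' ∧ j ≠ j' ∧ 0 < A i j ∧ 0 < A i' j' ∧ B = switchM A i i' j j'

/-- `Cat_{n,d}(k)`: `d`-regular bipartite multigraphs with exactly `k` multiplicity-2 edges,
no two of them incident, and no multiplicities `≥ 3`. -/
def InCat (n d k : ℕ) (A : Fin n → Fin n → ℕ) : Prop :=
  IsReg n d A ∧ (∀ i j, A i j ≤ 2) ∧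
    (Finset.univ.filter fun p : Fin n × Fin n => A p.1 p.2 = 2).card = k ∧
    (∀ i j j', A i j = 2 → A i j' = 2 → j = j') ∧
    (∀ i i' j, A i j = 2 → A i' j = 2 → i = i')

/-- The set of multiedges (multiplicity-2 edges) of a multigraph. -/
def MEs {n : ℕ} (A : Fin n → Fin n → ℕ) : Finset (Fin n × Fin n) :=
  Finset.univ.filter fun p => A p.1 p.2 = 2

/-- The data of a simple path starting at a multigraph `A ∈ Cat_{n,d}(k)`: to each
multiedge `e = (i_s, j_s)` of `A` it assigns the auxiliary edge `f e = (i'_s, j'_s)` used by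
the corresponding simple switching `⟨i_s, i'_s, j_s, j'_s⟩`.  The auxiliary left (resp. right)
vertices are pairwise distinct, avoid all multiedge left (resp. right) vertices, and the
switching creates no multiple edges. -/
def SimplePathData {n : ℕ} (A : Fin n → Fin n → ℕ)
    (f : Fin n × Fin n → Fin n × Fin n) : Prop :=
  (∀ e ∈ MEs A, 0 < A (f e).1 (f e).2 ∧ A (f e).1 e.2 = 0 ∧ A e.1 (f e).2 = 0 ∧
    ∀ e' ∈ MEs A, (f e).1 ≠ e'.1 ∧ (f e).2 ≠ e'.2) ∧
  ∀ e ∈ MEs A, ∀ e' ∈ MEs A, e ≠ e' → (f e).1 ≠ (f e').1 ∧ (f e).2 ≠ (f e').2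

/-- The endpoint of the simple path with data `f` starting at `A`: each multiedge
`(i_s,j_s)` loses one parallel edge, the auxiliary edge `(i'_s,j'_s)` is removed, and the
edges `(i_s,j'_s)` and `(i'_s,j_s)` are added. -/
def endpointM {n : ℕ} (A : Fin n → Fin n → ℕ) (f : Fin n × Fin n → Fin n × Fin n) :
    Fin n → Fin n → ℕ :=
  fun a b =>
    A a b + ((MEs A).filter fun e => (a = e.1 ∧ b = (f e).2) ∨ (a = (f e).1 ∧ b = e.2)).card
      - ((MEs A).filter fun e => (a = e.1 ∧ b = e.2) ∨ (a = (f e).1 ∧ b = (f e).2)).card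

/-- The `s`-neighborhood of a multigraph: all endpoints of simple paths starting at it. -/
def SN {n : ℕ} (A : Fin n → Fin n → ℕ) : Set (Fin n → Fin n → ℕ) :=
  {B | ∃ f, SimplePathData A f ∧ B = endpointM A f}

/-- The anti-expansion measure `Z(G)` of a simple graph. -/
def Zae {n : ℕ} (A : Fin n → Fin n → ℕ) : ℕ :=
  (Finset.univ.filter fun p : Fin n × Fin n =>
    0 < A p.1 p.2 ∧ ∃ k, k ≠ p.1 ∧ 0 < A k p.2 ∧
      2 ≤ (Finset.univ.filter fun j => 0 < A p.1 j ∧ 0 < A k j).card).card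

namespace Stmt13Aux

variable {m n : ℕ}

def PathOK (P : ℕ → Fin m → Fin n → ℕ) (L : ℕ) : Prop :=
  ∀ t < L, ∃ i i' j j', i ≠ i' ∧ j ≠ j' ∧
    0 < P t i j ∧ 0 < P t i' j' ∧
    P (t + 1) = switchM (P t) i i' j j' ∧ IsSimpleG (P (t + 1))

section SwitchVals

variable (A : Fin m → Fin n → ℕ) {i i' : Fin m} {j j' : Fin n}

lemma sw1 : switchM A i i' j j' i j = A i j - 1 := by simp [switchM]

lemma sw2 (hii : i ≠ i') : switchM A i i' j j' i' j' = A i' j' - 1 := by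
  simp [switchM, Ne.symm hii]

lemma sw3 (hii : i ≠ i') (hjj : j ≠ j') : switchM A i i' j j' i j' = A i j' + 1 := by
  simp [switchM, hii, Ne.symm hjj]

lemma sw4 (hii : i ≠ i') (hjj : j ≠ j') : switchM A i i' j j' i' j = A i' j + 1 := by
  simp [switchM, hjj, Ne.symm hii]

lemma sw5 {a : Fin m} {b : Fin n} (h1 : ¬(a = i ∧ b = j)) (h2 : ¬(a = i' ∧ b = j'))
    (h3 : ¬(a = i ∧ b = j')) (h4 : ¬(a = i' ∧ b = j)) :
    switchM A i i' j j' a b = A a b := by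
  simp only [switchM, if_neg h1, if_neg h2, if_neg h3, if_neg h4]

end SwitchVals

/-- summing a function modified at two points -/
lemma sum_mod2 {ι : Type*} [Fintype ι] [DecidableEq ι] (f : ι → ℕ) (j j' : ι)
    (hjj : j ≠ j') (h : 1 ≤ f j) :
    ∑ b, (if b = j then f b - 1 else if b = j' then f b + 1 else f b) = ∑ b, f b := by
  classical
  have hj' : j' ∈ (univ : Finset ι).erase j := by simp [Ne.symm hjj]
  rw [← Finset.sum_erase_add _ _ (mem_univ j), ← Finset.sum_erase_add _ _ hj']
  rw [← Finset.sum_erase_add (univ : Finset ι) f (mem_univ j),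
      ← Finset.sum_erase_add _ f hj']
  have hcong : ∑ b ∈ (((univ : Finset ι).erase j).erase j'),
      (if b = j then f b - 1 else if b = j' then f b + 1 else f b) =
      ∑ b ∈ (((univ : Finset ι).erase j).erase j'), f b := by
    apply Finset.sum_congr rfl
    intro b hb
    have hb1 : b ≠ j' := (Finset.mem_erase.1 hb).1
    have hb2 : b ≠ j := (Finset.mem_erase.1 ((Finset.mem_erase.1 hb).2)).1
    simp [hb1, hb2]
  rw [hcong]
  have h1 : (if j' = j then f j' - 1 else if j' = j' then f j' + 1 else f j') = f j' + 1 := by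
    simp [Ne.symm hjj]
  have h2 : (if j = j then f j - 1 else if j = j' then f j + 1 else f j) = f j - 1 := by simp
  rw [h1, h2]
  omega

section Swap

variable {A : Fin m → Fin n → ℕ} {i i' : Fin m} {j j' : Fin n}

lemma switch_row_sums (hii : i ≠ i') (hjj : j ≠ j') (h1 : 1 ≤ A i j) (h2 : 1 ≤ A i' j') :
    ∀ a, ∑ b, switchM A i i' j j' a b = ∑ b, A a b := by
  intro a
  by_cases hai : a = i
  · have key : ∀ b, switchM A i i' j j' i b =
        (if b = j then A i b - 1 else if b = j' then A i b + 1 else A i b) := by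
      intro b
      by_cases hb : b = j
      · rw [hb, sw1]; simp [hjj]
      · by_cases hb' : b = j'
        · rw [hb', sw3 A hii hjj]; simp [Ne.symm hjj]
        · rw [sw5 A (by tauto) (by tauto) (by tauto) (by tauto)]; simp [hb, hb']
    rw [hai, Finset.sum_congr rfl (fun b _ => key b)]
    exact sum_mod2 (A i) j j' hjj h1
  · by_cases hai' : a = i'
    · have key : ∀ b, switchM A i i' j j' i' b =
          (if b = j' then A i' b - 1 else if b = j then A i' b + 1 else A i' b) := by
        intro b
        by_cases hb : b = j'
        · rw [hb, sw2 A hii]; simp [Ne.symm hjj]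
        · by_cases hb' : b = j
          · rw [hb', sw4 A hii hjj]; simp [hjj]
          · rw [sw5 A (by tauto) (by tauto) (by tauto) (by tauto)]; simp [hb, hb']
      rw [hai', Finset.sum_congr rfl (fun b _ => key b)]
      exact sum_mod2 (A i') j' j (Ne.symm hjj) h2
    · apply Finset.sum_congr rfl
      intro b _
      rw [sw5 A (by tauto) (by tauto) (by tauto) (by tauto)]

lemma switch_col_sums (hii : i ≠ i') (hjj : j ≠ j') (h1 : 1 ≤ A i j) (h2 : 1 ≤ A i' j') :
    ∀ b, ∑ a, switchM A i i' j j' a b = ∑ a, A a b := by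
  intro b
  by_cases hbj : b = j
  · have key : ∀ a, switchM A i i' j j' a j =
        (if a = i then A a j - 1 else if a = i' then A a j + 1 else A a j) := by
      intro a
      by_cases ha : a = i
      · rw [ha, sw1]; simp [ha, hii]
      · by_cases ha' : a = i'
        · rw [ha', sw4 A hii hjj]; simp [Ne.symm hii]
        · rw [sw5 A (by tauto) (by tauto) (by tauto) (by tauto)]; simp [ha, ha']
    rw [hbj, Finset.sum_congr rfl (fun a _ => key a)]
    exact sum_mod2 (fun a => A a j) i i' hii h1
  · by_cases hbj' : b = j'
    · have key : ∀ a, switchM A i i' j j' a j' =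
          (if a = i' then A a j' - 1 else if a = i then A a j' + 1 else A a j') := by
        intro a
        by_cases ha : a = i'
        · rw [ha, sw2 A hii]; simp [Ne.symm hii]
        · by_cases ha' : a = i
          · rw [ha', sw3 A hii hjj]; simp [hii]
          · rw [sw5 A (by tauto) (by tauto) (by tauto) (by tauto)]; simp [ha, ha']
      rw [hbj', Finset.sum_congr rfl (fun a _ => key a)]
      exact sum_mod2 (fun a => A a j') i' i (Ne.symm hii) h2
    · apply Finset.sum_congr rfl
      intro a _
      rw [sw5 A (by tauto) (by tauto) (by tauto) (by tauto)]

/-- a "nice" swap: both target cells are free. -/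
lemma swap_nice (hs : IsSimpleG A) (hii : i ≠ i') (hjj : j ≠ j')
    (e1 : A i j = 1) (e2 : A i' j' = 1) (e3 : A i j' = 0) (e4 : A i' j = 0) :
    switchM A i i' j j' i j = 0 ∧ switchM A i i' j j' i' j' = 0 ∧
    switchM A i i' j j' i j' = 1 ∧ switchM A i i' j j' i' j = 1 ∧
    IsSimpleG (switchM A i i' j j') := by
  refine ⟨by rw [sw1, e1], by rw [sw2 A hii, e2], by rw [sw3 A hii hjj, e3],
    by rw [sw4 A hii hjj, e4], ?_⟩
  intro a b
  by_cases c1 : a = i ∧ b = j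
  · obtain ⟨rfl, rfl⟩ := c1; rw [sw1]; omega
  by_cases c2 : a = i' ∧ b = j'
  · obtain ⟨rfl, rfl⟩ := c2; rw [sw2 A hii]; omega
  by_cases c3 : a = i ∧ b = j'
  · obtain ⟨rfl, rfl⟩ := c3; rw [sw3 A hii hjj, e3]
  by_cases c4 : a = i' ∧ b = j
  · obtain ⟨rfl, rfl⟩ := c4; rw [sw4 A hii hjj, e4]
  · rw [sw5 A c1 c2 c3 c4]; exact hs a b

end Swap

lemma path_pres {P : ℕ → Fin m → Fin n → ℕ} {L : ℕ} (hP : PathOK P L) :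
    ∀ u ≤ L, (∀ a, ∑ b, P u a b = ∑ b, P 0 a b) ∧ (∀ b, ∑ a, P u a b = ∑ a, P 0 a b) := by
  intro u
  induction u with
  | zero => intro _; exact ⟨fun _ => rfl, fun _ => rfl⟩
  | succ v ih =>
    intro hv
    obtain ⟨i, i', j, j', hii, hjj, h1, h2, heq, _⟩ := hP v (by omega)
    have ihv := ih (by omega)
    constructor
    · intro a
      rw [heq, switch_row_sums hii hjj h1 h2 a]
      exact ihv.1 a
    · intro b
      rw [heq, switch_col_sums hii hjj h1 h2 b]
      exact ihv.2 b

lemma path_concat {P₁ P₂ : ℕ → Fin m → Fin n → ℕ} {L₁ L₂ : ℕ}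
    (h1 : PathOK P₁ L₁) (h2 : PathOK P₂ L₂) (hend : P₁ L₁ = P₂ 0) :
    ∃ P : ℕ → Fin m → Fin n → ℕ, P 0 = P₁ 0 ∧ P (L₁ + L₂) = P₂ L₂ ∧ PathOK P (L₁ + L₂) := by
  refine ⟨fun t => if t < L₁ then P₁ t else P₂ (t - L₁), ?_, ?_, ?_⟩
  · by_cases h : 0 < L₁
    · simp [h]
    · have hL : L₁ = 0 := by omega
      simp [hL, ← hend]
  · have : ¬ (L₁ + L₂ < L₁) := by omega
    simp [this]
  · intro t ht
    dsimp only
    have key : ∀ u ≤ L₁ + L₂, (if u < L₁ then P₁ u else P₂ (u - L₁)) =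
        (if u ≤ L₁ then P₁ u else P₂ (u - L₁)) := by
      intro u _
      by_cases h : u < L₁
      · simp [h, le_of_lt h]
      · by_cases h' : u = L₁
        · subst h'; simp [hend]
        · simp [h, show ¬ u ≤ L₁ by omega]
    rw [key t (by omega), key (t+1) (by omega)]
    by_cases hc : t < L₁
    · obtain ⟨i, i', j, j', props⟩ := h1 t hc
      exact ⟨i, i', j, j', by simpa [le_of_lt hc, Nat.succ_le_of_lt hc] using props⟩
    · have ht1 : ¬ t ≤ L₁ ∨ t = L₁ := by omega
      have htL : L₁ ≤ t := by omega
      obtain ⟨i, i', j, j', props⟩ := h2 (t - L₁) (by omega)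
      refine ⟨i, i', j, j', ?_⟩
      have e1 : (if t ≤ L₁ then P₁ t else P₂ (t - L₁)) = P₂ (t - L₁) := by
        rcases ht1 with h | h
        · simp [h]
        · subst h; simp [hend]
      have e2 : (if t + 1 ≤ L₁ then P₁ (t+1) else P₂ (t + 1 - L₁)) = P₂ (t - L₁ + 1) := by
        have : ¬ (t + 1 ≤ L₁) ∨ (t + 1 = L₁ ∧ L₁ ≤ t) := by omega
        have h' : ¬ (t + 1 ≤ L₁) := by omega
        simp [h', show t + 1 - L₁ = t - L₁ + 1 by omega]
      rw [e1, e2]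
      exact props


lemma resolve : ∀ ℓ : ℕ, 2 ≤ ℓ → ∀ A : Fin m → Fin n → ℕ, ∀ I : ℕ → Fin m, ∀ J : ℕ → Fin n,
    IsSimpleG A →
    (∀ a, a < ℓ → ∀ b, b < ℓ → I a = I b → a = b) →
    (∀ a, a < ℓ → ∀ b, b < ℓ → J a = J b → a = b) →
    (∀ t, t < ℓ → A (I t) (J t) = 1) →
    (∀ t, t + 1 < ℓ → A (I (t + 1)) (J t) = 0) →
    A (I 0) (J (ℓ - 1)) = 0 →
    ∃ L ≤ 2 * ℓ - 3, ∃ P : ℕ → Fin m → Fin n → ℕ,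
      P 0 = A ∧ PathOK P L ∧ IsSimpleG (P L) ∧
      (∀ t, t < ℓ → P L (I t) (J t) = 0) ∧
      (∀ t, t + 1 < ℓ → P L (I (t + 1)) (J t) = 1) ∧
      P L (I 0) (J (ℓ - 1)) = 1 ∧
      (∀ x y, (∀ t, t < ℓ → ¬(x = I t ∧ y = J t)) →
        (∀ t, t + 1 < ℓ → ¬(x = I (t + 1) ∧ y = J t)) →
        ¬(x = I 0 ∧ y = J (ℓ - 1)) → P L x y = A x y) := by
  intro ℓ
  induction ℓ using Nat.strong_induction_on with
  | _ ℓ IH =>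
  intro hℓ A I J hAs hI hJ hE hN hC
  classical
  have hex : ∃ s, 1 ≤ s ∧ s ≤ ℓ - 1 ∧ A (I 0) (J s) = 0 := ⟨ℓ - 1, by omega, le_refl _, hC⟩
  obtain ⟨hs1, hs2, hs3⟩ := Nat.find_spec hex
  set s := Nat.find hex with hs_def
  have hsℓ : s < ℓ := by omega
  have hmin : ∀ u, 1 ≤ u → u < s → A (I 0) (J u) = 1 := by
    intro u h1 h2
    have hne := Nat.find_min hex h2
    push_neg at hne
    have h3 := hne h1 (by omega)
    have h4 := hAs (I 0) (J u)
    omega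
  have hAs1 : A (I 0) (J (s - 1)) = 1 := by
    rcases Nat.lt_or_ge 1 s with h | h
    · exact hmin (s - 1) (by omega) (by omega)
    · rw [show s - 1 = 0 by omega]; exact hE 0 (by omega)
  have hI0s : I 0 ≠ I s := by
    intro h; have := hI 0 (by omega) s hsℓ h; omega
  have hJs : J (s - 1) ≠ J s := by
    intro h; have := hJ (s - 1) (by omega) s hsℓ h; omega
  have hAe2 : A (I s) (J s) = 1 := hE s hsℓ
  have hAn : A (I s) (J (s - 1)) = 0 := by
    have h := hN (s - 1) (by omega)
    rwa [show s - 1 + 1 = s by omega] at h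
  obtain ⟨e0, e1, e2, e3, hX1s⟩ := swap_nice hAs hI0s hJs hAs1 hAe2 hs3 hAn
  set X1 := switchM A (I 0) (I s) (J (s - 1)) (J s) with hX1
  have eU : ∀ x y, ¬(x = I 0 ∧ y = J (s - 1)) → ¬(x = I s ∧ y = J s) →
      ¬(x = I 0 ∧ y = J s) → ¬(x = I s ∧ y = J (s - 1)) → X1 x y = A x y := by
    intro x y h1 h2 h3 h4
    exact sw5 A h1 h2 h3 h4
  have step1 : PathOK (fun t => if t = 0 then A else X1) 1 := by
    intro t ht
    have ht0 : t = 0 := by omega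
    subst ht0
    refine ⟨I 0, I s, J (s - 1), J s, hI0s, hJs, ?_, ?_, ?_, ?_⟩
    · simp [hAs1]
    · simp [hAe2]
    · simp [hX1]
    · simpa using hX1s
  have phaseA : ∃ La, La ≤ 2 * s - 3 ∧ ∃ Qa : ℕ → Fin m → Fin n → ℕ,
      Qa 0 = X1 ∧ PathOK Qa La ∧ IsSimpleG (Qa La) ∧
      (∀ t, t < s → Qa La (I t) (J t) = 0) ∧
      (∀ t, t + 1 < s → Qa La (I (t + 1)) (J t) = 1) ∧
      (Qa La (I s) (J (s - 1)) = 1) ∧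
      (Qa La (I s) (J s) = 0) ∧
      (Qa La (I 0) (J s) = 1) ∧
      (2 ≤ s → Qa La (I 0) (J (s - 1)) = 1) ∧
      (∀ x y, (∀ t, t < s → ¬(x = I t ∧ y = J t)) →
        (∀ t, t + 1 ≤ s → ¬(x = I (t + 1) ∧ y = J t)) →
        ¬(x = I 0 ∧ y = J (s - 1)) → ¬(x = I 0 ∧ y = J s) →
        ¬(x = I s ∧ y = J s) → Qa La x y = A x y) := by
    by_cases hs2' : 2 ≤ s
    · have hIa : ∀ a, a < s → ∀ b, b < s → I a = I b → a = b :=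
        fun a ha b hb h => hI a (by omega) b (by omega) h
      have hJa : ∀ a, a < s → ∀ b, b < s → J a = J b → a = b :=
        fun a ha b hb h => hJ a (by omega) b (by omega) h
      have hEa : ∀ t, t < s → X1 (I t) (J t) = 1 := by
        intro t ht
        rw [eU (I t) (J t) ?_ ?_ ?_ ?_]
        · exact hE t (by omega)
        · rintro ⟨h1, h2⟩
          have := hI t (by omega) 0 (by omega) h1
          have := hJ t (by omega) (s - 1) (by omega) h2
          omega
        · rintro ⟨h1, _⟩
          have := hI t (by omega) s hsℓ h1
          omega
        · rintro ⟨_, h2⟩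
          have := hJ t (by omega) s hsℓ h2
          omega
        · rintro ⟨h1, _⟩
          have := hI t (by omega) s hsℓ h1
          omega
      have hNa : ∀ t, t + 1 < s → X1 (I (t + 1)) (J t) = 0 := by
        intro t ht
        rw [eU (I (t + 1)) (J t) ?_ ?_ ?_ ?_]
        · exact hN t (by omega)
        · rintro ⟨h1, _⟩
          have := hI (t + 1) (by omega) 0 (by omega) h1
          omega
        · rintro ⟨h1, _⟩
          have := hI (t + 1) (by omega) s hsℓ h1
          omega
        · rintro ⟨h1, _⟩
          have := hI (t + 1) (by omega) 0 (by omega) h1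
          omega
        · rintro ⟨h1, _⟩
          have := hI (t + 1) (by omega) s hsℓ h1
          omega
      have hCa : X1 (I 0) (J (s - 1)) = 0 := e0
      obtain ⟨La, hLa, Qa, hQa0, hQaP, hQas, a1, a2, a3, aU⟩ :=
        IH s hsℓ hs2' X1 I J hX1s hIa hJa hEa hNa hCa
      refine ⟨La, hLa, Qa, hQa0, hQaP, hQas, a1, a2, ?_, ?_, ?_, fun _ => a3, ?_⟩
      · rw [aU (I s) (J (s - 1)) ?_ ?_ ?_]
        · exact e3
        · rintro t ht ⟨h1, _⟩
          have := hI s hsℓ t (by omega) h1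
          omega
        · rintro t ht ⟨h1, _⟩
          have := hI s hsℓ (t + 1) (by omega) h1
          omega
        · rintro ⟨h1, _⟩
          exact hI0s h1.symm
      · rw [aU (I s) (J s) ?_ ?_ ?_]
        · exact e1
        · rintro t ht ⟨h1, _⟩
          have := hI s hsℓ t (by omega) h1
          omega
        · rintro t ht ⟨h1, _⟩
          have := hI s hsℓ (t + 1) (by omega) h1
          omega
        · rintro ⟨h1, _⟩
          exact hI0s h1.symm
      · rw [aU (I 0) (J s) ?_ ?_ ?_]
        · exact e2
        · rintro t ht ⟨h1, h2⟩
          have := hJ s hsℓ t (by omega) h2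
          omega
        · rintro t ht ⟨h1, _⟩
          have := hI 0 (by omega) (t + 1) (by omega) h1
          omega
        · rintro ⟨_, h2⟩
          exact hJs h2.symm
      · intro x y E1 E2 E3 E4 E5
        rw [aU x y (fun t ht => E1 t (by omega)) (fun t ht => E2 t (by omega)) E3]
        refine eU x y E3 E5 E4 ?_
        have h := E2 (s - 1) (by omega)
        rwa [show s - 1 + 1 = s by omega] at h
    · have hs1' : s = 1 := by omega
      refine ⟨0, by omega, fun _ => X1, rfl, fun t ht => absurd ht (by omega), hX1s,
        ?_, ?_, e3, e1, e2, fun h => absurd h (by omega), ?_⟩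
      · intro t ht
        have ht0 : t = 0 := by omega
        subst ht0
        show X1 (I 0) (J 0) = 0
        have h := e0
        rwa [show s - 1 = 0 by omega] at h
      · intro t ht; omega
      · intro x y E1 E2 E3 E4 E5
        refine eU x y E3 E5 E4 ?_
        have h := E2 (s - 1) (by omega)
        rwa [show s - 1 + 1 = s by omega] at h
  obtain ⟨La, hLa, Qa, hQa0, hQaP, hQas, A1, A2, A3, A4, A5, A6, AU⟩ := phaseA
  set b := ℓ - s with hbdef
  have hb1 : 1 ≤ b := by omega
  have phaseB : ∃ Lb, Lb ≤ 2 * b - 3 ∧ ∃ Qb : ℕ → Fin m → Fin n → ℕ,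
      Qb 0 = Qa La ∧ PathOK Qb Lb ∧ IsSimpleG (Qb Lb) ∧
      (∀ t, s ≤ t → t < ℓ → Qb Lb (I t) (J t) = 0) ∧
      (∀ t, s ≤ t → t + 1 < ℓ → Qb Lb (I (t + 1)) (J t) = 1) ∧
      (Qb Lb (I 0) (J (ℓ - 1)) = 1) ∧
      (2 ≤ b → Qb Lb (I 0) (J s) = 0) ∧
      (∀ x y, (∀ t, s ≤ t → t < ℓ → ¬(x = I t ∧ y = J t)) →
        (∀ t, s ≤ t → t + 1 < ℓ → ¬(x = I (t + 1) ∧ y = J t)) →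
        ¬(x = I 0 ∧ y = J (ℓ - 1)) → ¬(x = I 0 ∧ y = J s) → Qb Lb x y = Qa La x y) := by
    by_cases hb2 : 2 ≤ b
    · set Ib : ℕ → Fin m := fun u => if u = 0 then I 0 else I (s + u) with hIbdef
      set Jb : ℕ → Fin n := fun u => J (s + u) with hJbdef
      have hIb0 : Ib 0 = I 0 := by simp [hIbdef]
      have hIbp : ∀ u, u ≠ 0 → Ib u = I (s + u) := by
        intro u hu; simp [hIbdef, hu]
      have hJbu : ∀ u, Jb u = J (s + u) := fun u => by simp [hJbdef]
      have hIbInj : ∀ a, a < b → ∀ c, c < b → Ib a = Ib c → a = c := by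
        intro a ha c hc h
        by_cases ha0 : a = 0 <;> by_cases hc0 : c = 0
        · omega
        · rw [ha0, hIb0, hIbp c hc0] at h
          have := hI 0 (by omega) (s + c) (by omega) h
          omega
        · rw [hc0, hIb0, hIbp a ha0] at h
          have := hI (s + a) (by omega) 0 (by omega) h
          omega
        · rw [hIbp a ha0, hIbp c hc0] at h
          have := hI (s + a) (by omega) (s + c) (by omega) h
          omega
      have hJbInj : ∀ a, a < b → ∀ c, c < b → Jb a = Jb c → a = c := by
        intro a ha c hc h
        rw [hJbu, hJbu] at h
        have := hJ (s + a) (by omega) (s + c) (by omega) h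
        omega
      have hEb : ∀ u, u < b → Qa La (Ib u) (Jb u) = 1 := by
        intro u hu
        by_cases hu0 : u = 0
        · rw [hu0, hIb0, hJbu]
          rw [show s + 0 = s by omega]
          exact A5
        · rw [hIbp u hu0, hJbu]
          rw [AU (I (s + u)) (J (s + u)) ?_ ?_ ?_ ?_ ?_]
          · exact hE (s + u) (by omega)
          · rintro t ht ⟨h1, _⟩
            have := hI (s + u) (by omega) t (by omega) h1
            omega
          · rintro t ht ⟨h1, _⟩
            have := hI (s + u) (by omega) (t + 1) (by omega) h1
            omega
          · rintro ⟨h1, _⟩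
            have := hI (s + u) (by omega) 0 (by omega) h1
            omega
          · rintro ⟨h1, _⟩
            have := hI (s + u) (by omega) 0 (by omega) h1
            omega
          · rintro ⟨h1, _⟩
            have := hI (s + u) (by omega) s (by omega) h1
            omega
      have hNb : ∀ u, u + 1 < b → Qa La (Ib (u + 1)) (Jb u) = 0 := by
        intro u hu
        rw [hIbp (u + 1) (by omega), hJbu]
        rw [AU (I (s + (u + 1))) (J (s + u)) ?_ ?_ ?_ ?_ ?_]
        · rw [show s + (u + 1) = (s + u) + 1 by omega]
          exact hN (s + u) (by omega)
        · rintro t ht ⟨h1, _⟩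
          have := hI (s + (u + 1)) (by omega) t (by omega) h1
          omega
        · rintro t ht ⟨h1, _⟩
          have := hI (s + (u + 1)) (by omega) (t + 1) (by omega) h1
          omega
        · rintro ⟨h1, _⟩
          have := hI (s + (u + 1)) (by omega) 0 (by omega) h1
          omega
        · rintro ⟨h1, _⟩
          have := hI (s + (u + 1)) (by omega) 0 (by omega) h1
          omega
        · rintro ⟨h1, _⟩
          have := hI (s + (u + 1)) (by omega) s (by omega) h1
          omega
      have hCb : Qa La (Ib 0) (Jb (b - 1)) = 0 := by
        rw [hIb0, hJbu]
        rw [show s + (b - 1) = ℓ - 1 by omega]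
        rw [AU (I 0) (J (ℓ - 1)) ?_ ?_ ?_ ?_ ?_]
        · exact hC
        · rintro t ht ⟨h1, h2⟩
          have := hJ (ℓ - 1) (by omega) t (by omega) h2
          omega
        · rintro t ht ⟨h1, _⟩
          have := hI 0 (by omega) (t + 1) (by omega) h1
          omega
        · rintro ⟨_, h2⟩
          have := hJ (ℓ - 1) (by omega) (s - 1) (by omega) h2
          omega
        · rintro ⟨_, h2⟩
          have := hJ (ℓ - 1) (by omega) s (by omega) h2
          omega
        · rintro ⟨h1, _⟩
          exact hI0s h1
      obtain ⟨Lb, hLb, Qb, hQb0, hQbP, hQbs, b1, b2, b3, bU⟩ :=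
        IH b (by omega) hb2 (Qa La) Ib Jb hQas hIbInj hJbInj hEb hNb hCb
      refine ⟨Lb, hLb, Qb, hQb0, hQbP, hQbs, ?_, ?_, ?_, ?_, ?_⟩
      · intro t hst htl
        by_cases hts : t = s
        · rw [hts]
          rw [bU (I s) (J s) ?_ ?_ ?_]
          · exact A4
          · rintro u hu ⟨h1, _⟩
            by_cases hu0 : u = 0
            · rw [hu0, hIb0] at h1
              exact hI0s h1.symm
            · rw [hIbp u hu0] at h1
              have := hI s (by omega) (s + u) (by omega) h1
              omega
          · rintro u hu ⟨h1, _⟩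
            rw [hIbp (u + 1) (by omega)] at h1
            have := hI s (by omega) (s + (u + 1)) (by omega) h1
            omega
          · rintro ⟨h1, _⟩
            rw [hIb0] at h1
            exact hI0s h1.symm
        · have h := b1 (t - s) (by omega)
          rw [hIbp (t - s) (by omega), hJbu, show s + (t - s) = t by omega] at h
          exact h
      · intro t hst htl
        have h := b2 (t - s) (by omega)
        rw [hIbp (t - s + 1) (by omega), hJbu, show s + (t - s + 1) = t + 1 by omega,
          show s + (t - s) = t by omega] at h
        exact h
      · have h := b3
        rw [hIb0, hJbu, show s + (b - 1) = ℓ - 1 by omega] at h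
        exact h
      · intro _
        have h := b1 0 (by omega)
        rw [hIb0, hJbu, show s + 0 = s by omega] at h
        exact h
      · intro x y G1 G2 G3 G4
        rw [bU x y ?_ ?_ ?_]
        · rintro u hu ⟨h1, h2⟩
          by_cases hu0 : u = 0
          · rw [hu0, hIb0] at h1
            rw [hu0, hJbu, show s + 0 = s by omega] at h2
            exact G4 ⟨h1, h2⟩
          · rw [hIbp u hu0] at h1
            rw [hJbu] at h2
            exact G1 (s + u) (by omega) (by omega) ⟨h1, h2⟩
        · rintro u hu ⟨h1, h2⟩
          rw [hIbp (u + 1) (by omega), show s + (u + 1) = (s + u) + 1 by omega] at h1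
          rw [hJbu] at h2
          exact G2 (s + u) (by omega) (by omega) ⟨h1, h2⟩
        · rw [hIb0, hJbu, show s + (b - 1) = ℓ - 1 by omega]
          exact G3
    · have hbs : s = ℓ - 1 := by omega
      refine ⟨0, by omega, fun _ => Qa La, rfl, fun t ht => absurd ht (by omega), hQas,
        ?_, ?_, ?_, fun h => absurd h (by omega), fun x y _ _ _ _ => rfl⟩
      · intro t hst htl
        have hts : t = s := by omega
        rw [hts]
        exact A4
      · intro t hst htl; omega
      · have h := A5
        rw [show s = ℓ - 1 from hbs] at h
        exact h
  obtain ⟨Lb, hLb, Qb, hQb0, hQbP, hQbs, B1, B2, B3, B4, B5⟩ := phaseB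
  obtain ⟨R1, hR10, hR1e, hR1P⟩ := path_concat step1 hQaP (by simp [hQa0])
  obtain ⟨R, hR0, hRe, hRP⟩ := path_concat hR1P hQbP (by rw [hR1e, hQb0])
  refine ⟨1 + La + Lb, by omega, R, ?_, ?_, ?_, ?_, ?_, ?_, ?_⟩
  · rw [hR0, hR10]; simp
  · exact hRP
  · rw [show 1 + La + Lb = 1 + La + Lb from rfl, hRe]
    exact hQbs
  · intro t ht
    rw [hRe]
    by_cases hts : t < s
    · rw [B5 (I t) (J t) ?_ ?_ ?_ ?_]
      · exact A1 t hts
      · rintro u hsu hul ⟨h1, _⟩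
        have := hI t (by omega) u (by omega) h1
        omega
      · rintro u hsu hul ⟨h1, _⟩
        have := hI t (by omega) (u + 1) (by omega) h1
        omega
      · rintro ⟨_, h2⟩
        have := hJ t (by omega) (ℓ - 1) (by omega) h2
        omega
      · rintro ⟨_, h2⟩
        have := hJ t (by omega) s (by omega) h2
        omega
    · exact B1 t (by omega) ht
  · intro t ht
    rw [hRe]
    by_cases h1 : t + 1 < s
    · rw [B5 (I (t + 1)) (J t) ?_ ?_ ?_ ?_]
      · exact A2 t h1
      · rintro u hsu hul ⟨hx, _⟩
        have := hI (t + 1) (by omega) u (by omega) hx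
        omega
      · rintro u hsu hul ⟨hx, _⟩
        have := hI (t + 1) (by omega) (u + 1) (by omega) hx
        omega
      · rintro ⟨_, hy⟩
        have := hJ t (by omega) (ℓ - 1) (by omega) hy
        omega
      · rintro ⟨_, hy⟩
        have := hJ t (by omega) s (by omega) hy
        omega
    · by_cases h2 : t + 1 = s
      · rw [show t = s - 1 by omega, show s - 1 + 1 = s by omega]
        rw [B5 (I s) (J (s - 1)) ?_ ?_ ?_ ?_]
        · exact A3
        · rintro u hsu hul ⟨hx, hy⟩
          have := hJ (s - 1) (by omega) u (by omega) hy
          omega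
        · rintro u hsu hul ⟨hx, _⟩
          have := hI s (by omega) (u + 1) (by omega) hx
          omega
        · rintro ⟨hx, _⟩
          exact hI0s hx.symm
        · rintro ⟨hx, _⟩
          exact hI0s hx.symm
      · exact B2 t (by omega) ht
  · rw [hRe]
    exact B3
  · intro x y G1 G2 G3
    rw [hRe]
    by_cases h4 : x = I 0 ∧ y = J s
    · have hslt : s < ℓ - 1 := by
        rcases Nat.lt_or_ge s (ℓ - 1) with h | h
        · exact h
        · exfalso
          apply G3
          rw [show ℓ - 1 = s by omega]
          exact h4
      obtain ⟨hx, hy⟩ := h4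
      rw [hx, hy, B4 (by omega)]
      rw [hs3]
    · by_cases h3 : x = I 0 ∧ y = J (s - 1)
      · have hs2' : 2 ≤ s := by
          by_contra hcon
          have hs1'' : s = 1 := by omega
          apply G1 0 (by omega)
          refine ⟨h3.1, ?_⟩
          rw [h3.2]
          congr 1
          omega
        obtain ⟨hx, hy⟩ := h3
        rw [hx, hy]
        rw [B5 (I 0) (J (s - 1)) ?_ ?_ ?_ ?_]
        · rw [A6 hs2', hAs1]
        · rintro u hsu hul ⟨_, hy2⟩
          have := hJ (s - 1) (by omega) u (by omega) hy2
          omega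
        · rintro u hsu hul ⟨_, hy2⟩
          have := hJ (s - 1) (by omega) u (by omega) hy2
          omega
        · rintro ⟨_, hy2⟩
          have := hJ (s - 1) (by omega) (ℓ - 1) (by omega) hy2
          omega
        · rintro ⟨_, hy2⟩
          exact hJs hy2
      · rw [B5 x y (fun u hsu hul => G1 u hul) (fun u hsu hul => G2 u hul) G3 h4]
        rw [AU x y (fun u hul => G1 u (by omega)) (fun u hul => G2 u (by omega)) h3 h4 (G1 s (by omega))]
lemma find_cycle (A B : Fin m → Fin n → ℕ)
    (hrow : ∀ i, ∑ j, A i j = ∑ j, B i j) (hcol : ∀ j, ∑ i, A i j = ∑ i, B i j)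
    (hne : ∃ p : Fin m × Fin n, A p.1 p.2 ≠ B p.1 p.2) :
    ∃ ℓ, 2 ≤ ℓ ∧ ∃ I : ℕ → Fin m, ∃ J : ℕ → Fin n,
      (∀ a, a < ℓ → ∀ c, c < ℓ → I a = I c → a = c) ∧
      (∀ a, a < ℓ → ∀ c, c < ℓ → J a = J c → a = c) ∧
      (∀ t, t < ℓ → B (I t) (J t) < A (I t) (J t)) ∧
      (∀ t, t + 1 < ℓ → A (I (t + 1)) (J t) < B (I (t + 1)) (J t)) ∧
      (A (I 0) (J (ℓ - 1)) < B (I 0) (J (ℓ - 1))) := by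
  classical
  have exA : ∀ i0 : Fin m, (∃ jj, A i0 jj < B i0 jj) → ∃ j', B i0 j' < A i0 j' := by
    rintro i0 ⟨j0, hj0⟩
    by_contra hcon
    push_neg at hcon
    have hlt : ∑ j, A i0 j < ∑ j, B i0 j :=
      Finset.sum_lt_sum (fun j _ => hcon j) ⟨j0, mem_univ _, hj0⟩
    exact absurd (hrow i0) hlt.ne
  have exB : ∀ j0 : Fin n, (∃ ii, B ii j0 < A ii j0) → ∃ i', A i' j0 < B i' j0 := by
    rintro j0 ⟨i0, hi0⟩
    by_contra hcon
    push_neg at hcon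
    have hlt : ∑ i, B i j0 < ∑ i, A i j0 :=
      Finset.sum_lt_sum (fun i _ => hcon i) ⟨i0, mem_univ _, hi0⟩
    exact absurd (hcol j0) hlt.ne'
  have hstart : ∃ p : Fin m × Fin n, B p.1 p.2 < A p.1 p.2 := by
    obtain ⟨p, hp⟩ := hne
    rcases Nat.lt_or_ge (A p.1 p.2) (B p.1 p.2) with h | h
    · obtain ⟨j', hj'⟩ := exA p.1 ⟨p.2, h⟩
      exact ⟨(p.1, j'), hj'⟩
    · exact ⟨p, by omega⟩
  have stepf : ∀ p : Fin m × Fin n, B p.1 p.2 < A p.1 p.2 →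
      ∃ q : Fin m × Fin n, (B q.1 q.2 < A q.1 q.2) ∧ (A q.1 p.2 < B q.1 p.2) := by
    intro p hp
    obtain ⟨i', hi'⟩ := exB p.2 ⟨p.1, hp⟩
    obtain ⟨j', hj'⟩ := exA i' ⟨p.2, hi'⟩
    exact ⟨(i', j'), hj', hi'⟩
  choose! next hnext1 hnext2 using stepf
  obtain ⟨p0, hp0⟩ := hstart
  set g : ℕ → Fin m × Fin n := fun t => next^[t] p0 with hg_def
  have hgsucc : ∀ t, g (t + 1) = next (g t) := by
    intro t
    simp [hg_def, Function.iterate_succ_apply']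
  have hg : ∀ t, B (g t).1 (g t).2 < A (g t).1 (g t).2 := by
    intro t
    induction t with
    | zero => simpa [hg_def] using hp0
    | succ v ih =>
      rw [hgsucc v]
      exact hnext1 (g v) ih
  have hg2 : ∀ t, A (g (t + 1)).1 (g t).2 < B (g (t + 1)).1 (g t).2 := by
    intro t
    rw [hgsucc t]
    exact hnext2 (g t) (hg t)
  -- pigeonhole on first components
  have hpig : ∃ a ∈ Finset.range (m + 1), ∃ c ∈ Finset.range (m + 1),
      a ≠ c ∧ (g a).1 = (g c).1 :=
    Finset.exists_ne_map_eq_of_card_lt_of_maps_to (s := Finset.range (m + 1))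
      (t := (univ : Finset (Fin m))) (by simp) (fun a _ => mem_univ ((g a).1))
  obtain ⟨a0, ha0, c0, hc0, hac, heq⟩ := hpig
  have hlt : ∃ a c, a < c ∧ (g a).1 = (g c).1 := by
    rcases Nat.lt_or_ge a0 c0 with h | h
    · exact ⟨a0, c0, h, heq⟩
    · exact ⟨c0, a0, by omega, heq.symm⟩
  obtain ⟨a, c, hac', heq'⟩ := hlt
  -- existence of a closed walk
  have hwalk : ∃ ℓ, 1 ≤ ℓ ∧ ∃ I : ℕ → Fin m, ∃ J : ℕ → Fin n,
      (∀ t, t < ℓ → B (I t) (J t) < A (I t) (J t)) ∧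
      (∀ t, t + 1 < ℓ → A (I (t + 1)) (J t) < B (I (t + 1)) (J t)) ∧
      (A (I 0) (J (ℓ - 1)) < B (I 0) (J (ℓ - 1))) := by
    refine ⟨c - a, by omega, fun u => (g (a + u)).1, fun u => (g (a + u)).2, ?_, ?_, ?_⟩
    · intro t _
      exact hg (a + t)
    · intro t _
      have h := hg2 (a + t)
      rwa [show a + t + 1 = a + (t + 1) by omega] at h
    · have h := hg2 (c - 1)
      rw [show c - 1 + 1 = c by omega] at h
      dsimp only
      rw [show a + 0 = a by omega, show a + (c - a - 1) = c - 1 by omega, heq']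
      exact h
  set ℓ0 := Nat.find hwalk with hℓ0_def
  obtain ⟨hℓ1, I, J, hE', hN', hC'⟩ := Nat.find_spec hwalk
  rw [← hℓ0_def] at hℓ1 hE' hN' hC' 
  have h2ℓ : 2 ≤ ℓ0 := by
    rcases Nat.lt_or_ge ℓ0 2 with h | h
    · exfalso
      have hℓeq : ℓ0 = 1 := by omega
      have h1 := hE' 0 (by omega)
      have h2 := hC'
      rw [hℓeq] at h2
      simp at h2
      omega
    · exact h
  have hIinj : ∀ a', a' < ℓ0 → ∀ c', c' < ℓ0 → I a' = I c' → a' = c' := by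
    intro a' ha' c' hc' hII
    by_contra hne'
    have key : ∀ x y, x < y → y < ℓ0 → I x = I y → False := by
      intro x y hxy hy hIxy
      have hshort : 1 ≤ y - x ∧ ∃ I' : ℕ → Fin m, ∃ J' : ℕ → Fin n,
          (∀ t, t < y - x → B (I' t) (J' t) < A (I' t) (J' t)) ∧
          (∀ t, t + 1 < y - x → A (I' (t + 1)) (J' t) < B (I' (t + 1)) (J' t)) ∧
          (A (I' 0) (J' (y - x - 1)) < B (I' 0) (J' (y - x - 1))) := by
        refine ⟨by omega, fun u => I (x + u), fun u => J (x + u), ?_, ?_, ?_⟩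
        · intro t ht
          exact hE' (x + t) (by omega)
        · intro t ht
          have h := hN' (x + t) (by omega)
          rwa [show x + t + 1 = x + (t + 1) by omega] at h
        · have h := hN' (y - 1) (by omega)
          rw [show y - 1 + 1 = y by omega] at h
          dsimp only
          rw [show x + 0 = x by omega, show x + (y - x - 1) = y - 1 by omega, hIxy]
          exact h
      exact Nat.find_min hwalk (show y - x < ℓ0 by omega) hshort
    rcases Nat.lt_or_ge a' c' with h | h
    · exact key a' c' h hc' hII
    · exact key c' a' (by omega) ha' hII.symm
  have hJinj : ∀ a', a' < ℓ0 → ∀ c', c' < ℓ0 → J a' = J c' → a' = c' := by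
    intro a' ha' c' hc' hJJ
    by_contra hne'
    have key : ∀ x y, x < y → y < ℓ0 → J x = J y → False := by
      intro x y hxy hy hJxy
      have hshort : 1 ≤ y - x ∧ ∃ I' : ℕ → Fin m, ∃ J' : ℕ → Fin n,
          (∀ t, t < y - x → B (I' t) (J' t) < A (I' t) (J' t)) ∧
          (∀ t, t + 1 < y - x → A (I' (t + 1)) (J' t) < B (I' (t + 1)) (J' t)) ∧
          (A (I' 0) (J' (y - x - 1)) < B (I' 0) (J' (y - x - 1))) := by
        refine ⟨by omega, fun u => I (x + 1 + u), fun u => J (x + 1 + u), ?_, ?_, ?_⟩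
        · intro t ht
          exact hE' (x + 1 + t) (by omega)
        · intro t ht
          have h := hN' (x + 1 + t) (by omega)
          rwa [show x + 1 + t + 1 = x + 1 + (t + 1) by omega] at h
        · have h := hN' x (by omega)
          dsimp only
          rw [show x + 1 + 0 = x + 1 by omega, show x + 1 + (y - x - 1) = y by omega, hJxy.symm]
          exact h
      exact Nat.find_min hwalk (show y - x < ℓ0 by omega) hshort
    rcases Nat.lt_or_ge a' c' with h | h
    · exact key a' c' h hc' hJJ
    · exact key c' a' (by omega) ha' hJJ.symm
  exact ⟨ℓ0, h2ℓ, I, J, hIinj, hJinj, hE', hN', hC'⟩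
lemma outer (B : Fin m → Fin n → ℕ) (hBs : IsSimpleG B) :
    ∀ N : ℕ, ∀ A : Fin m → Fin n → ℕ, IsSimpleG A →
    (∀ i, ∑ j, A i j = ∑ j, B i j) → (∀ j, ∑ i, A i j = ∑ i, B i j) →
    (univ.filter fun p : Fin m × Fin n => A p.1 p.2 ≠ B p.1 p.2).card ≤ N →
    ∃ L, L ≤ (univ.filter fun p : Fin m × Fin n => A p.1 p.2 ≠ B p.1 p.2).card ∧
      ∃ P : ℕ → Fin m → Fin n → ℕ, P 0 = A ∧ P L = B ∧ PathOK P L := by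
  intro N
  induction N with
  | zero =>
    intro A hAs hrow hcol hcard
    have h0 : (univ.filter fun p : Fin m × Fin n => A p.1 p.2 ≠ B p.1 p.2).card = 0 := by omega
    have hAB : A = B := by
      funext x y
      by_contra hxy
      have hmem : (⟨x, y⟩ : Fin m × Fin n) ∈
          (univ.filter fun p : Fin m × Fin n => A p.1 p.2 ≠ B p.1 p.2) := by
        simp [hxy]
      rw [Finset.card_eq_zero] at h0
      rw [h0] at hmem
      exact absurd hmem (Finset.notMem_empty _)
    exact ⟨0, by omega, fun _ => A, rfl, by rw [hAB], fun t ht => absurd ht (by omega)⟩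
  | succ N ih =>
    intro A hAs hrow hcol hcard
    by_cases h0 : (univ.filter fun p : Fin m × Fin n => A p.1 p.2 ≠ B p.1 p.2).card = 0
    · have hAB : A = B := by
        funext x y
        by_contra hxy
        have hmem : (⟨x, y⟩ : Fin m × Fin n) ∈
            (univ.filter fun p : Fin m × Fin n => A p.1 p.2 ≠ B p.1 p.2) := by
          simp [hxy]
        rw [Finset.card_eq_zero] at h0
        rw [h0] at hmem
        exact absurd hmem (Finset.notMem_empty _)
      exact ⟨0, by omega, fun _ => A, rfl, by rw [hAB], fun t ht => absurd ht (by omega)⟩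
    · have hne : ∃ p : Fin m × Fin n, A p.1 p.2 ≠ B p.1 p.2 := by
        have hpos : 0 < (univ.filter fun p : Fin m × Fin n => A p.1 p.2 ≠ B p.1 p.2).card := by
          omega
        obtain ⟨p, hp⟩ := Finset.card_pos.1 hpos
        exact ⟨p, (mem_filter.1 hp).2⟩
      obtain ⟨ℓ0, h2ℓ, I, J, hIinj, hJinj, hAd, hBd, hCd⟩ := find_cycle A B hrow hcol hne
      have hE2 : ∀ t, t < ℓ0 → A (I t) (J t) = 1 := by
        intro t ht
        have h1 := hAd t ht
        have h2 := hAs (I t) (J t)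
        omega
      have hB0 : ∀ t, t < ℓ0 → B (I t) (J t) = 0 := by
        intro t ht
        have h1 := hAd t ht
        have h2 := hAs (I t) (J t)
        omega
      have hN2 : ∀ t, t + 1 < ℓ0 → A (I (t + 1)) (J t) = 0 := by
        intro t ht
        have h1 := hBd t ht
        have h2 := hBs (I (t + 1)) (J t)
        omega
      have hN3 : ∀ t, t + 1 < ℓ0 → B (I (t + 1)) (J t) = 1 := by
        intro t ht
        have h1 := hBd t ht
        have h2 := hBs (I (t + 1)) (J t)
        omega
      have hC0 : A (I 0) (J (ℓ0 - 1)) = 0 := by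
        have h2 := hBs (I 0) (J (ℓ0 - 1))
        omega
      have hC1 : B (I 0) (J (ℓ0 - 1)) = 1 := by
        have h2 := hBs (I 0) (J (ℓ0 - 1))
        omega
      obtain ⟨L1, hL1, P1, hP10, hP1P, hP1s, F1, F2, F3, FU⟩ :=
        resolve ℓ0 h2ℓ A I J hAs hIinj hJinj hE2 hN2 hC0
      set S1 : Finset (Fin m × Fin n) := (Finset.range ℓ0).image (fun t => (I t, J t)) with hS1
      set S2 : Finset (Fin m × Fin n) := (Finset.range ℓ0).image
        (fun t => (if t + 1 = ℓ0 then I 0 else I (t + 1), J t)) with hS2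
      have hS1mem : ∀ p : Fin m × Fin n, p ∈ S1 ↔ ∃ t, t < ℓ0 ∧ I t = p.1 ∧ J t = p.2 := by
        intro p
        simp only [hS1, Finset.mem_image, Finset.mem_range, Prod.ext_iff]
        all_goals tauto
      have hS2mem : ∀ p : Fin m × Fin n, p ∈ S2 ↔ ∃ t, t < ℓ0 ∧
          (if t + 1 = ℓ0 then I 0 else I (t + 1)) = p.1 ∧ J t = p.2 := by
        intro p
        simp only [hS2, Finset.mem_image, Finset.mem_range, Prod.ext_iff]
        all_goals tauto
      have hS1val : ∀ p ∈ S1, A p.1 p.2 = 1 ∧ B p.1 p.2 = 0 := by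
        intro p hp
        obtain ⟨t, ht, h1, h2⟩ := (hS1mem p).1 hp
        rw [← h1, ← h2]
        exact ⟨hE2 t ht, hB0 t ht⟩
      have hS2val : ∀ p ∈ S2, A p.1 p.2 = 0 ∧ B p.1 p.2 = 1 := by
        intro p hp
        obtain ⟨t, ht, h1, h2⟩ := (hS2mem p).1 hp
        rw [← h1, ← h2]
        by_cases hc : t + 1 = ℓ0
        · rw [if_pos hc, show t = ℓ0 - 1 by omega]
          exact ⟨hC0, hC1⟩
        · rw [if_neg hc]
          exact ⟨hN2 t (by omega), hN3 t (by omega)⟩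
      have hdisj : Disjoint S1 S2 := by
        rw [Finset.disjoint_left]
        intro p h1 h2
        have ha := (hS1val p h1).1
        have hb := (hS2val p h2).1
        omega
      have hS1card : S1.card = ℓ0 := by
        rw [hS1, Finset.card_image_of_injOn, Finset.card_range]
        intro t ht u hu h
        rw [Prod.ext_iff] at h
        exact hJinj t (Finset.mem_range.1 ht) u (Finset.mem_range.1 hu) h.2
      have hS2card : S2.card = ℓ0 := by
        rw [hS2, Finset.card_image_of_injOn, Finset.card_range]
        intro t ht u hu h
        rw [Prod.ext_iff] at h
        exact hJinj t (Finset.mem_range.1 ht) u (Finset.mem_range.1 hu) h.2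
      have hScard : (S1 ∪ S2).card = 2 * ℓ0 := by
        rw [Finset.card_union_of_disjoint hdisj, hS1card, hS2card]
        omega
      have hSsub : S1 ∪ S2 ⊆ univ.filter fun p : Fin m × Fin n => A p.1 p.2 ≠ B p.1 p.2 := by
        intro p hp
        simp only [mem_filter, mem_univ, true_and]
        rcases Finset.mem_union.1 hp with h | h
        · have := hS1val p h
          omega
        · have := hS2val p h
          omega
      have hA'val : ∀ p ∈ S1 ∪ S2, P1 L1 p.1 p.2 = B p.1 p.2 := by
        intro p hp
        rcases Finset.mem_union.1 hp with h | h
        · obtain ⟨t, ht, h1, h2⟩ := (hS1mem p).1 h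
          rw [← h1, ← h2, F1 t ht, hB0 t ht]
        · obtain ⟨t, ht, h1, h2⟩ := (hS2mem p).1 h
          rw [← h1, ← h2]
          by_cases hc : t + 1 = ℓ0
          · rw [if_pos hc, show t = ℓ0 - 1 by omega, F3, hC1]
          · rw [if_neg hc, F2 t (by omega), hN3 t (by omega)]
      have hA'unch : ∀ p : Fin m × Fin n, p ∉ S1 ∪ S2 → P1 L1 p.1 p.2 = A p.1 p.2 := by
        intro p hp
        rw [Finset.mem_union] at hp
        push_neg at hp
        obtain ⟨hp1, hp2⟩ := hp
        apply FU
        · rintro t ht ⟨hx, hy⟩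
          exact hp1 ((hS1mem p).2 ⟨t, ht, hx.symm, hy.symm⟩)
        · rintro t ht ⟨hx, hy⟩
          refine hp2 ((hS2mem p).2 ⟨t, by omega, ?_, hy.symm⟩)
          rw [if_neg (by omega)]
          exact hx.symm
        · rintro ⟨hx, hy⟩
          refine hp2 ((hS2mem p).2 ⟨ℓ0 - 1, by omega, ?_, hy.symm⟩)
          rw [if_pos (by omega)]
          exact hx.symm
      have hsub : (univ.filter fun p : Fin m × Fin n => P1 L1 p.1 p.2 ≠ B p.1 p.2) ⊆
          (univ.filter fun p : Fin m × Fin n => A p.1 p.2 ≠ B p.1 p.2) \ (S1 ∪ S2) := by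
        intro p hp
        have hpd := (mem_filter.1 hp).2
        rw [Finset.mem_sdiff]
        by_cases hmem : p ∈ S1 ∪ S2
        · exact absurd (hA'val p hmem) hpd
        · refine ⟨?_, hmem⟩
          simp only [mem_filter, mem_univ, true_and]
          rw [← hA'unch p hmem]
          exact hpd
      have hcard' : (univ.filter fun p : Fin m × Fin n => P1 L1 p.1 p.2 ≠ B p.1 p.2).card ≤
          (univ.filter fun p : Fin m × Fin n => A p.1 p.2 ≠ B p.1 p.2).card - 2 * ℓ0 := by
        have h1 := Finset.card_le_card hsub
        rw [Finset.card_sdiff_of_subset hSsub, hScard] at h1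
        exact h1
      have hrow' : ∀ i, ∑ j, P1 L1 i j = ∑ j, B i j := by
        intro i
        have h := (path_pres hP1P L1 le_rfl).1 i
        rw [hP10] at h
        rw [h]
        exact hrow i
      have hcol' : ∀ j, ∑ i, P1 L1 i j = ∑ i, B i j := by
        intro j
        have h := (path_pres hP1P L1 le_rfl).2 j
        rw [hP10] at h
        rw [h]
        exact hcol j
      have h2S : 2 * ℓ0 ≤ (univ.filter fun p : Fin m × Fin n => A p.1 p.2 ≠ B p.1 p.2).card := by
        have h := Finset.card_le_card hSsub
        rwa [hScard] at h
      obtain ⟨L2, hL2, P2, hP20, hP2e, hP2P⟩ := ih (P1 L1) hP1s hrow' hcol' (by omega)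
      obtain ⟨P, hP0, hPe, hPP⟩ := path_concat hP1P hP2P hP20.symm
      refine ⟨L1 + L2, by omega, P, by rw [hP0, hP10], by rw [hPe, hP2e], hPP⟩

end Stmt13Aux

/-- Let `m ≥ 2`, `d ≥ 3`, and let `G̃₁ ≠ G̃₂` be simple bipartite graphs on
`[m]⊔[n]` with all left degrees `d` and the same right degree sequence, differing in at most
`k` entries.  Then there is a path of at most `k+2` simple switchings from `G̃₁` to `G̃₂`
inside the set of simple bipartite graphs with these degrees. -/
theorem stmt13 (m n d k : ℕ) (hm : 2 ≤ m) (hd : 3 ≤ d)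
    (A B : Fin m → Fin n → ℕ) (hne : A ≠ B)
    (hAs : IsSimpleG A) (hBs : IsSimpleG B)
    (hAl : ∀ i, ∑ j, A i j = d) (hBl : ∀ i, ∑ j, B i j = d)
    (hr : ∀ j, ∑ i, A i j = ∑ i, B i j)
    (hk : (Finset.univ.filter fun p : Fin m × Fin n => A p.1 p.2 ≠ B p.1 p.2).card ≤ k) :
    ∃ L ≤ k + 2, ∃ P : ℕ → Fin m → Fin n → ℕ,
      P 0 = A ∧ P L = B ∧
      ∀ t < L, ∃ i i' j j', i ≠ i' ∧ j ≠ j' ∧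
        0 < P t i j ∧ 0 < P t i' j' ∧
        P (t + 1) = switchM (P t) i i' j j' ∧ IsSimpleG (P (t + 1)) := by
  obtain ⟨L, hL, P, h0, he, hP⟩ := Stmt13Aux.outer B hBs
    ((Finset.univ.filter fun p : Fin m × Fin n => A p.1 p.2 ≠ B p.1 p.2).card) A hAs
    (fun i => by rw [hAl i, hBl i]) hr le_rfl
  exact ⟨L, by omega, P, h0, he, hP⟩
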